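/- If C is an almost isolated clique in the friendship graph with hinge node i, then for any optimal partition π* there exists a coalition C' ∈ π* with C ⊆ C'; furthermore, if i ∉ C', then C' = C. -/

import Mathlib

open Finset

/-- FA utility of agent `i` with friend set `t` for a coalition `C` containing her:
`u_i(C) = |C ∩ F_i| − |C ∩ E_i| / n`, where `E_i = N \ (F_i ∪ {i})`. -/
def faUtil (n : ℕ) (t : Finset (Fin n)) (i : Fin n) (C : Finset (Fin n)) : ℚ :=
  ((C ∩ t).card : ℚ) - ((C \ (t ∪ {i})).card : ℚ) / (n : ℚ)

/-- Social welfare of a partition of the agents (`SW(π) = Σ_i u_i(π(i))`). -/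
def faSW (n : ℕ) (F : Fin n → Finset (Fin n))
    (π : Finpartition (univ : Finset (Fin n))) : ℚ :=
  ∑ C ∈ π.parts, ∑ i ∈ C, faUtil n (F i) i C

/-- value of the ordered pair (j,k): 1 if k is a friend of j, else -1/n. -/
def faw (n : ℕ) (F : Fin n → Finset (Fin n)) (j k : Fin n) : ℚ :=
  if k ∈ F j then 1 else -(1 / (n : ℚ))

/-- total value, for j, of the agents in T. -/
def faW (n : ℕ) (F : Fin n → Finset (Fin n)) (j : Fin n) (T : Finset (Fin n)) : ℚ :=
  ∑ k ∈ T, faw n F j k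

lemma faW_union {n F j} {S T : Finset (Fin n)} (h : Disjoint S T) :
    faW n F j (S ∪ T) = faW n F j S + faW n F j T :=
  Finset.sum_union h

lemma faW_friends {n F j} {T : Finset (Fin n)} (h : ∀ k ∈ T, k ∈ F j) :
    faW n F j T = T.card := by
  rw [faW, Finset.sum_congr rfl (fun k hk => by rw [faw, if_pos (h k hk)]),
    Finset.sum_const, nsmul_eq_mul, mul_one]

lemma faW_enemies {n F j} {T : Finset (Fin n)} (h : ∀ k ∈ T, k ∉ F j) :
    faW n F j T = -((T.card : ℚ) / n) := by
  rw [faW, Finset.sum_congr rfl (fun k hk => by rw [faw, if_neg (h k hk)]),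
    Finset.sum_const, nsmul_eq_mul, mul_neg, mul_one_div]

lemma faW_ge {n F j} (T : Finset (Fin n)) :
    -((T.card : ℚ) / n) ≤ faW n F j T := by
  have h : -((T.card : ℚ) / n) = ∑ _k ∈ T, -(1 / (n : ℚ)) := by
    rw [Finset.sum_const, nsmul_eq_mul, mul_neg, mul_one_div]
  rw [h, faW]
  refine Finset.sum_le_sum fun k _ => ?_
  rw [faw]
  split
  · have h0 : (0:ℚ) ≤ 1 / (n:ℚ) := by positivity
    linarith
  · exact le_refl _

lemma faW_le {n F j} (T : Finset (Fin n)) : faW n F j T ≤ T.card := by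
  have h : (T.card : ℚ) = ∑ _k ∈ T, (1:ℚ) := by
    rw [Finset.sum_const, nsmul_eq_mul, mul_one]
  rw [h, faW]
  refine Finset.sum_le_sum fun k _ => ?_
  rw [faw]
  split
  · exact le_refl _
  · have h0 : (0:ℚ) ≤ 1 / (n:ℚ) := by positivity
    linarith

lemma faUtil_eq {n : ℕ} {F : Fin n → Finset (Fin n)} (j : Fin n) (hFj : j ∉ F j)
    (C : Finset (Fin n)) : faUtil n (F j) j C = faW n F j (C.erase j) := by
  rw [faUtil, faW]
  simp only [faw]
  rw [Finset.sum_ite, Finset.sum_const, Finset.sum_const]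
  have h1 : (C.erase j).filter (· ∈ F j) = C ∩ F j := by
    ext x
    simp only [mem_filter, mem_erase, mem_inter]
    constructor
    · rintro ⟨⟨_, h⟩, h'⟩; exact ⟨h, h'⟩
    · rintro ⟨h, h'⟩; exact ⟨⟨fun e => hFj (e ▸ h'), h⟩, h'⟩
  have h2 : (C.erase j).filter (· ∉ F j) = C \ (F j ∪ {j}) := by
    ext x
    simp only [mem_filter, mem_erase, mem_sdiff, mem_union, mem_singleton]
    tauto
  rw [h1, h2]
  push_cast
  ring

lemma faSW_eq {n : ℕ} {F : Fin n → Finset (Fin n)} (hF : ∀ j, j ∉ F j)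
    (π : Finpartition (univ : Finset (Fin n))) :
    faSW n F π = ∑ j : Fin n, faW n F j ((π.part j).erase j) := by
  have h : (univ : Finset (Fin n)) = π.parts.biUnion id := π.biUnion_parts.symm
  rw [faSW, show ∑ j : Fin n, faW n F j ((π.part j).erase j)
      = ∑ j ∈ π.parts.biUnion id, faW n F j ((π.part j).erase j)
    from Finset.sum_congr h (fun _ _ => rfl),
    Finset.sum_biUnion (π.supIndep.pairwiseDisjoint)]
  refine Finset.sum_congr rfl fun P hP => Finset.sum_congr rfl fun j hj => ?_
  rw [faUtil_eq j (hF j), π.part_eq_of_mem hP hj]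

/-- build a partition of `univ` from a cover assignment. -/
def ofCover {n : ℕ} (g : Fin n → Finset (Fin n)) (h1 : ∀ j, j ∈ g j)
    (h2 : ∀ j k, (g j ∩ g k).Nonempty → g j = g k) :
    Finpartition (univ : Finset (Fin n)) where
  parts := univ.image g
  supIndep := by
    rw [Finset.supIndep_iff_pairwiseDisjoint]
    intro P hP Q hQ hne
    simp only [coe_image, Set.mem_image] at hP hQ
    obtain ⟨j, -, rfl⟩ := hP
    obtain ⟨k, -, rfl⟩ := hQ
    by_contra hd
    exact hne (h2 j k (Finset.not_disjoint_iff_nonempty_inter.mp hd))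
  sup_parts := by
    refine le_antisymm (Finset.sup_le fun P _ => Finset.subset_univ P) fun x _ => ?_
    rw [Finset.mem_sup]
    exact ⟨g x, Finset.mem_image_of_mem g (mem_univ x), h1 x⟩
  bot_notMem := by
    simp only [bot_eq_empty, Finset.mem_image]
    rintro ⟨j, -, hj⟩
    exact absurd (h1 j) (by rw [hj]; simp)


lemma erase_decomp_notmem {α : Type*} [DecidableEq α] (Q C : Finset α) {j : α} (hj : j ∉ C) :
    Q.erase j = (Q \ C).erase j ∪ (Q ∩ C) ∧ Disjoint ((Q \ C).erase j) (Q ∩ C) := by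
  constructor
  · conv_lhs => rw [← Finset.sdiff_union_inter Q C]
    rw [Finset.erase_union_distrib,
      Finset.erase_eq_of_notMem (fun h => hj (Finset.mem_inter.mp h).2)]
  · exact ((Finset.sdiff_disjoint.mono_right Finset.inter_subset_right)).mono_left
      (Finset.erase_subset _ _)

lemma erase_decomp_mem {α : Type*} [DecidableEq α] (Q C : Finset α) {j : α} (hj : j ∈ C) :
    Q.erase j = (Q ∩ C).erase j ∪ (Q \ C) ∧ Disjoint ((Q ∩ C).erase j) (Q \ C) := by
  constructor
  · conv_lhs => rw [show Q = (Q ∩ C) ∪ (Q \ C) by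
      rw [Finset.union_comm, Finset.sdiff_union_inter]]
    rw [Finset.erase_union_distrib,
      Finset.erase_eq_of_notMem (fun h => (Finset.mem_sdiff.mp h).2 hj)]
  · exact (Finset.sdiff_disjoint.symm.mono_left Finset.inter_subset_right).mono_left
      (Finset.erase_subset _ _)

lemma ofCover_part {n : ℕ} (g : Fin n → Finset (Fin n)) (h1 : ∀ j, j ∈ g j)
    (h2 : ∀ j k, (g j ∩ g k).Nonempty → g j = g k) (j : Fin n) :
    (ofCover g h1 h2).part j = g j :=
  Finpartition.part_eq_of_mem _ (Finset.mem_image_of_mem g (mem_univ j)) (h1 j)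

set_option maxHeartbeats 1600000 in
/-- If `C` is an almost isolated clique with hinge node `i`, then any optimal partition `π`
has a coalition `C'` with `C ⊆ C'`, and moreover `i ∉ C'` implies `C' = C`. -/
theorem stmt1 (n : ℕ) (hn : 0 < n) (F : Fin n → Finset (Fin n)) (hF : ∀ j, j ∉ F j)
    (C : Finset (Fin n)) (i : Fin n) (hiC : i ∉ C)
    (hclique : ∀ j ∈ C, ∀ k ∈ C, j ≠ k → k ∈ F j)
    (hisolated : ∀ j ∈ C, ∀ l : Fin n, l ∉ C → l ≠ i → l ∉ F j ∧ j ∉ F l)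
    (π : Finpartition (univ : Finset (Fin n)))
    (hopt : ∀ σ : Finpartition (univ : Finset (Fin n)), faSW n F σ ≤ faSW n F π) :
    ∃ C' ∈ π.parts, C ⊆ C' ∧ (i ∉ C' → C' = C) := by
  classical
  have hn' : (0:ℚ) < n := by exact_mod_cast hn
  set P := π.part i with hPdef
  have hiP : i ∈ P := π.mem_part (mem_univ i)
  have hPmem : P ∈ π.parts := π.part_mem.mpr (mem_univ i)
  have partP : ∀ j ∈ P, π.part j = P := fun j hj => π.part_eq_of_mem hPmem hj
  have hi_not : ∀ j : Fin n, j ∉ P → i ∉ π.part j := by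
    intro j hj hi'
    have he : π.part i = π.part j := π.part_eq_of_mem (π.part_mem.mpr (mem_univ j)) hi'
    exact hj (by rw [hPdef, he]; exact π.mem_part (mem_univ j))
  have hnotP : ∀ x ∈ C, ∀ j : Fin n, j ∉ P → x ∈ π.part j → x ∉ P := by
    intro x _ j hj hx hxP
    have he : π.part j = P := π.eq_of_mem_parts (π.part_mem.mpr (mem_univ j)) hPmem hx hxP
    exact hj (he ▸ π.mem_part (mem_univ j))
  by_cases hCsub : C ⊆ P
  · exact ⟨P, hPmem, hCsub, fun h => absurd hiP h⟩

  -- B = C \ P is nonempty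
  have hBne : (C \ P).Nonempty := by
    rw [Finset.sdiff_nonempty]; exact hCsub
  have hCne : C.Nonempty := hBne.mono Finset.sdiff_subset
  have hBsubC : (C \ P) ⊆ C := Finset.sdiff_subset
  have hBP : Disjoint (C \ P) P := Finset.sdiff_disjoint
  have hCup : C ∪ P = (C \ P) ∪ P := by
    ext x; simp only [mem_union, mem_sdiff]; tauto
  have hQC_B : ∀ j : Fin n, j ∉ P → π.part j ∩ C ⊆ C \ P := by
    intro j hj x hx
    rw [mem_inter] at hx
    rw [mem_sdiff]
    exact ⟨hx.2, hnotP x hx.2 j hj hx.1⟩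
  have hPsplit : (C ∩ P) ∪ (P \ C) = P := by
    ext x; simp only [mem_union, mem_inter, mem_sdiff]; tauto
  have hdisjA : Disjoint (C ∩ P) (P \ C) := by
    refine Finset.disjoint_left.mpr fun x hx hx' => ?_
    rw [mem_inter] at hx; rw [mem_sdiff] at hx'; exact hx'.2 hx.1
  by_cases hAne : (C ∩ P).Nonempty
  · -- move (ii): merge C into i's part; strict improvement, contradiction
    exfalso
    have hcross : ∀ k : Fin n, k ∉ C ∪ P → ∀ x, x ∈ C ∪ P → x ∈ π.part k \ C → False := by
      intro k hk x hx1 hx2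
      rw [mem_sdiff] at hx2
      have hxP : x ∈ P := (mem_union.mp hx1).resolve_left hx2.2
      have he : π.part k = P := π.eq_of_mem_parts (π.part_mem.mpr (mem_univ k)) hPmem hx2.1 hxP
      exact hk (mem_union_right _ (by rw [← he]; exact π.mem_part (mem_univ k)))
    obtain ⟨σ, hσpart⟩ : ∃ σ : Finpartition (univ : Finset (Fin n)),
        ∀ j, σ.part j = if j ∈ C ∪ P then C ∪ P else π.part j \ C := by
      refine ⟨ofCover (fun j => if j ∈ C ∪ P then C ∪ P else π.part j \ C) ?_ ?_,
        fun j => ofCover_part _ _ _ j⟩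
      · intro j
        split
        · assumption
        · next h =>
          rw [mem_sdiff]
          exact ⟨π.mem_part (mem_univ j), fun hc => h (mem_union_left _ hc)⟩
      · rintro j k ⟨x, hx⟩
        rw [mem_inter] at hx
        obtain ⟨hxj, hxk⟩ := hx
        by_cases hj : j ∈ C ∪ P <;> by_cases hk : k ∈ C ∪ P
        · rw [if_pos hj, if_pos hk]
        · rw [if_pos hj] at hxj; rw [if_neg hk] at hxk
          exact (hcross k hk x hxj hxk).elim
        · rw [if_neg hj] at hxj; rw [if_pos hk] at hxk
          exact (hcross j hj x hxk hxj).elim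
        · rw [if_neg hj] at hxj; rw [if_neg hk] at hxk
          rw [if_neg hj, if_neg hk]
          rw [mem_sdiff] at hxj hxk
          rw [π.eq_of_mem_parts (π.part_mem.mpr (mem_univ j)) (π.part_mem.mpr (mem_univ k))
            hxj.1 hxk.1]
    set d : Fin n → ℚ :=
      fun j => faW n F j ((σ.part j).erase j) - faW n F j ((π.part j).erase j) with hd
    have hΔ : ∑ j : Fin n, d j ≤ 0 := by
      have hieq := hopt σ
      rw [faSW_eq hF σ, faSW_eq hF π] at hieq
      rw [hd]
      rw [Finset.sum_sub_distrib]
      linarith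
    -- region bounds
    have hR : ∀ j ∈ (univ : Finset (Fin n)) \ (C ∪ P), 0 ≤ d j := by
      intro j hj
      rw [mem_sdiff, mem_union] at hj
      push_neg at hj
      obtain ⟨-, hjC, hjP⟩ := hj
      have hji : j ≠ i := fun e => hjP (e ▸ hiP)
      have hgj : σ.part j = π.part j \ C := by
        rw [hσpart j, if_neg (by rw [mem_union]; tauto)]
      obtain ⟨hdec, hdis⟩ := erase_decomp_notmem (π.part j) C hjC
      have hEn : faW n F j (π.part j ∩ C) ≤ 0 := by
        rw [faW_enemies (fun k hk => ((hisolated k (mem_inter.mp hk).2 j hjC hji).2))]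
        have h0 : (0:ℚ) ≤ ((π.part j ∩ C).card : ℚ) / n := by positivity
        linarith
      have hdj : d j = -(faW n F j (π.part j ∩ C)) := by
        rw [hd]; dsimp only
        rw [hgj, hdec, faW_union hdis]; ring
      rw [hdj]
      linarith
    have hPCb : ∀ j ∈ P \ C, -(((C \ P).card : ℚ)/n) ≤ d j := by
      intro j hj
      rw [mem_sdiff] at hj
      obtain ⟨hjP, hjC⟩ := hj
      have hgj : σ.part j = C ∪ P := by rw [hσpart j, if_pos (mem_union_right _ hjP)]
      have hpj : π.part j = P := partP j hjP
      have hjB : j ∉ C \ P := fun h => hjC (hBsubC h)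
      have hdec : (C ∪ P).erase j = (C \ P) ∪ P.erase j := by
        rw [hCup, Finset.erase_union_distrib, Finset.erase_eq_of_notMem hjB]
      have hdis : Disjoint (C \ P) (P.erase j) := hBP.mono_right (Finset.erase_subset _ _)
      have hge : -(((C \ P).card : ℚ)/n) ≤ faW n F j (C \ P) := faW_ge _
      have hdj : d j = faW n F j (C \ P) := by
        rw [hd]; dsimp only
        rw [hgj, hpj, hdec, faW_union hdis]; ring
      rw [hdj]
      linarith
    have hAd : ∀ j ∈ C ∩ P, d j = ((C \ P).card : ℚ) := by
      intro j hj
      rw [mem_inter] at hj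
      obtain ⟨hjC, hjP⟩ := hj
      have hgj : σ.part j = C ∪ P := by rw [hσpart j, if_pos (mem_union_right _ hjP)]
      have hpj : π.part j = P := partP j hjP
      have hjB : j ∉ C \ P := fun h => (mem_sdiff.mp h).2 hjP
      have hdec : (C ∪ P).erase j = (C \ P) ∪ P.erase j := by
        rw [hCup, Finset.erase_union_distrib, Finset.erase_eq_of_notMem hjB]
      have hdis : Disjoint (C \ P) (P.erase j) := hBP.mono_right (Finset.erase_subset _ _)
      have hfr : faW n F j (C \ P) = ((C \ P).card : ℚ) :=
        faW_friends (fun k hk =>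
          hclique j hjC k (hBsubC hk) (fun e => (mem_sdiff.mp hk).2 (e ▸ hjP)))
      have hdj : d j = faW n F j (C \ P) := by
        rw [hd]; dsimp only
        rw [hgj, hpj, hdec, faW_union hdis]; ring
      rw [hdj, hfr]
    have hBd : ∀ j ∈ C \ P,
        ((C ∩ P).card : ℚ) - ((univ \ C).card : ℚ)/n ≤ d j := by
      intro j hj
      rw [mem_sdiff] at hj
      obtain ⟨hjC, hjP⟩ := hj
      have hgj : σ.part j = C ∪ P := by rw [hσpart j, if_pos (mem_union_left _ hjC)]
      have hdec : (C ∪ P).erase j = (C \ P).erase j ∪ P := by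
        rw [hCup, Finset.erase_union_distrib, Finset.erase_eq_of_notMem hjP]
      have hdis : Disjoint ((C \ P).erase j) P := hBP.mono_left (Finset.erase_subset _ _)
      have hWA : faW n F j (C ∩ P) = ((C ∩ P).card : ℚ) :=
        faW_friends (fun k hk => by
          rw [mem_inter] at hk
          exact hclique j hjC k hk.1 (fun e => hjP (e ▸ hk.2)))
      have hWPC : -(((P \ C).card : ℚ)/n) ≤ faW n F j (P \ C) := faW_ge _
      have hcard1 : (((P \ C).card : ℚ)) ≤ ((univ \ C).card : ℚ) := by
        exact_mod_cast Finset.card_le_card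
          (Finset.sdiff_subset_sdiff (subset_univ P) (Finset.Subset.refl C))
      have hWB : faW n F j ((C \ P).erase j) = (((C \ P).erase j).card : ℚ) :=
        faW_friends (fun k hk => by
          rw [mem_erase] at hk
          obtain ⟨hne, hkB⟩ := hk
          rw [mem_sdiff] at hkB
          exact hclique j hjC k hkB.1 (Ne.symm hne))
      have hiQ : i ∉ π.part j := hi_not j hjP
      obtain ⟨hdec2, hdis2⟩ := erase_decomp_mem (π.part j) C hjC
      have hWold1 : faW n F j ((π.part j ∩ C).erase j) ≤ (((C \ P).erase j).card : ℚ) := by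
        refine le_trans (faW_le _) ?_
        exact_mod_cast Finset.card_le_card (Finset.erase_subset_erase _ (hQC_B j hjP))
      have hWold2 : faW n F j (π.part j \ C) ≤ 0 := by
        rw [faW_enemies (fun k hk => by
          rw [mem_sdiff] at hk
          exact (hisolated j hjC k hk.2 (fun e => hiQ (e ▸ hk.1))).1)]
        have h0 : (0:ℚ) ≤ ((π.part j \ C).card : ℚ)/n := by positivity
        linarith
      have hWP : faW n F j P = faW n F j (C ∩ P) + faW n F j (P \ C) := by
        conv_lhs => rw [← hPsplit]
        exact faW_union hdisjA
      have hdj : d j = (((C \ P).erase j).card : ℚ)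
          + (faW n F j (C ∩ P) + faW n F j (P \ C))
          - (faW n F j ((π.part j ∩ C).erase j) + faW n F j (π.part j \ C)) := by
        rw [hd]; dsimp only
        rw [hgj, hdec, faW_union hdis, hWB, hWP, hdec2, faW_union hdis2]
      have hcard1' : ((P \ C).card : ℚ)/n ≤ ((univ \ C).card : ℚ)/n :=
        div_le_div_of_nonneg_right hcard1 hn'.le
      rw [hdj, hWA]
      linarith
    -- put it together
    have hsplit : ∑ j : Fin n, d j =
        (∑ j ∈ (univ : Finset (Fin n)) \ (C ∪ P), d j) +
          ((∑ j ∈ C \ P, d j) + ((∑ j ∈ C ∩ P, d j) + ∑ j ∈ P \ C, d j)) := by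
      rw [← Finset.sum_sdiff (subset_univ (C ∪ P))]
      congr 1
      have hU : C ∪ P = (C \ P) ∪ ((C ∩ P) ∪ (P \ C)) := by
        rw [hPsplit, hCup]
      rw [hU, Finset.sum_union (hBP.mono_right (le_of_eq hPsplit)),
        Finset.sum_union hdisjA]
    have t1 : (0:ℚ) ≤ ∑ j ∈ (univ : Finset (Fin n)) \ (C ∪ P), d j :=
      Finset.sum_nonneg hR
    have t2 : ((P \ C).card : ℚ) * (-(((C \ P).card : ℚ)/n)) ≤ ∑ j ∈ P \ C, d j := by
      have h := Finset.card_nsmul_le_sum (P \ C) d _ hPCb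
      rwa [nsmul_eq_mul] at h
    have t3 : ∑ j ∈ C ∩ P, d j = ((C ∩ P).card : ℚ) * ((C \ P).card : ℚ) := by
      rw [Finset.sum_congr rfl hAd, Finset.sum_const, nsmul_eq_mul]
    have t4 : ((C \ P).card : ℚ) * (((C ∩ P).card : ℚ) - ((univ \ C).card : ℚ)/n)
        ≤ ∑ j ∈ C \ P, d j := by
      have h := Finset.card_nsmul_le_sum (C \ P) d _ hBd
      rwa [nsmul_eq_mul] at h
    have ha1 : 1 ≤ ((C ∩ P).card : ℚ) := by
      exact_mod_cast Nat.one_le_iff_ne_zero.mpr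
        (Finset.card_ne_zero_of_mem hAne.choose_spec)
    have hb1 : 1 ≤ ((C \ P).card : ℚ) := by
      exact_mod_cast Nat.one_le_iff_ne_zero.mpr
        (Finset.card_ne_zero_of_mem hBne.choose_spec)
    have hpcu : ((P \ C).card : ℚ) ≤ ((univ \ C).card : ℚ) := by
      exact_mod_cast Finset.card_le_card
        (Finset.sdiff_subset_sdiff (subset_univ P) (Finset.Subset.refl C))
    have huC : ((univ \ C).card : ℚ) + (C.card : ℚ) = (n : ℚ) := by
      have h := Finset.card_sdiff_add_card_eq_card (subset_univ C)
      have h2 : (univ : Finset (Fin n)).card = n := by simp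
      exact_mod_cast h2 ▸ h
    have hab : ((C ∩ P).card : ℚ) + ((C \ P).card : ℚ) = (C.card : ℚ) := by
      exact_mod_cast Finset.card_inter_add_card_sdiff C P
    have hun : ((univ \ C).card : ℚ)/n < ((C ∩ P).card : ℚ) := by
      have h1 : ((univ \ C).card : ℚ) < n := by linarith
      calc ((univ \ C).card : ℚ)/n < 1 := (div_lt_one hn').mpr h1
        _ ≤ ((C ∩ P).card : ℚ) := ha1
    have hkey1 : ((univ \ C).card : ℚ) * (-(((C \ P).card : ℚ)/n))
        ≤ ((P \ C).card : ℚ) * (-(((C \ P).card : ℚ)/n)) := by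
      apply mul_le_mul_of_nonpos_right hpcu
      have h0 : (0:ℚ) ≤ ((C \ P).card : ℚ)/n := by positivity
      linarith
    have hkey2 : ((C \ P).card : ℚ) * (((univ \ C).card : ℚ)/n)
        < ((C \ P).card : ℚ) * ((C ∩ P).card : ℚ) :=
      mul_lt_mul_of_pos_left hun (by linarith)
    have hpos : 0 < ∑ j : Fin n, d j := by
      rw [hsplit]
      have heq : ((univ \ C).card : ℚ) * (-(((C \ P).card : ℚ)/n))
          = -(((C \ P).card : ℚ) * (((univ \ C).card : ℚ)/n)) := by ring
      linarith [t1, t2, t3, t4, hkey1, hkey2, heq]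
    linarith
  · -- C ∩ P empty: C must itself be a part
    have hdisjCP : Disjoint C P :=
      Finset.disjoint_left.mpr fun x hxC hxP => hAne ⟨x, mem_inter.mpr ⟨hxC, hxP⟩⟩
    have hCparts : C ∈ π.parts := by
      by_contra hC
      obtain ⟨σ, hσpart⟩ : ∃ σ : Finpartition (univ : Finset (Fin n)),
          ∀ j, σ.part j = if j ∈ C then C else π.part j \ C := by
        refine ⟨ofCover (fun j => if j ∈ C then C else π.part j \ C) ?_ ?_,
          fun j => ofCover_part _ _ _ j⟩
        · intro j
          split
          · assumption
          · next h =>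
            rw [mem_sdiff]
            exact ⟨π.mem_part (mem_univ j), h⟩
        · rintro j k ⟨x, hx⟩
          rw [mem_inter] at hx
          obtain ⟨hxj, hxk⟩ := hx
          by_cases hj : j ∈ C <;> by_cases hk : k ∈ C
          · rw [if_pos hj, if_pos hk]
          · rw [if_pos hj] at hxj; rw [if_neg hk] at hxk
            exact absurd hxj (mem_sdiff.mp hxk).2
          · rw [if_neg hj] at hxj; rw [if_pos hk] at hxk
            exact absurd hxk (mem_sdiff.mp hxj).2
          · rw [if_neg hj] at hxj; rw [if_neg hk] at hxk
            rw [if_neg hj, if_neg hk]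
            rw [mem_sdiff] at hxj hxk
            rw [π.eq_of_mem_parts (π.part_mem.mpr (mem_univ j)) (π.part_mem.mpr (mem_univ k))
              hxj.1 hxk.1]
      set d : Fin n → ℚ :=
        fun j => faW n F j ((σ.part j).erase j) - faW n F j ((π.part j).erase j) with hd
      have hΔ : ∑ j : Fin n, d j ≤ 0 := by
        have hieq := hopt σ
        rw [faSW_eq hF σ, faSW_eq hF π] at hieq
        rw [hd]
        rw [Finset.sum_sub_distrib]
        linarith
      have hiQ : ∀ j : Fin n, j ∈ C → i ∉ π.part j := by
        intro j hj hi'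
        have he : π.part j = P := π.eq_of_mem_parts (π.part_mem.mpr (mem_univ j)) hPmem hi' hiP
        exact Finset.disjoint_left.mp hdisjCP hj (he ▸ π.mem_part (mem_univ j))
      -- exactly compute d j for j ∈ C
      have hdC : ∀ j ∈ C, d j = ((C.erase j).card : ℚ)
          - (((π.part j ∩ C).erase j).card : ℚ) + ((π.part j \ C).card : ℚ)/n := by
        intro j hjC
        have hgj : σ.part j = C := by rw [hσpart j, if_pos hjC]
        obtain ⟨hdec2, hdis2⟩ := erase_decomp_mem (π.part j) C hjC
        have hWnew : faW n F j (C.erase j) = ((C.erase j).card : ℚ) :=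
          faW_friends (fun k hk => by
            rw [mem_erase] at hk
            exact hclique j hjC k hk.2 (Ne.symm hk.1))
        have hWmid : faW n F j ((π.part j ∩ C).erase j)
            = (((π.part j ∩ C).erase j).card : ℚ) :=
          faW_friends (fun k hk => by
            rw [mem_erase, mem_inter] at hk
            exact hclique j hjC k hk.2.2 (Ne.symm hk.1))
        have hWold : faW n F j (π.part j \ C) = -(((π.part j \ C).card : ℚ)/n) :=
          faW_enemies (fun k hk => by
            rw [mem_sdiff] at hk
            exact (hisolated j hjC k hk.2 (fun e => (hiQ j hjC) (e ▸ hk.1))).1)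
        rw [hd]
        dsimp only
        rw [hgj, hWnew, hdec2, faW_union hdis2, hWmid, hWold]
        ring
      have hnonneg : ∀ j ∈ (univ : Finset (Fin n)), 0 ≤ d j := by
        intro j _
        by_cases hjC : j ∈ C
        · rw [hdC j hjC]
          have hle : (((π.part j ∩ C).erase j).card : ℚ) ≤ ((C.erase j).card : ℚ) := by
            exact_mod_cast Finset.card_le_card
              (Finset.erase_subset_erase _ Finset.inter_subset_right)
          have h0 : (0:ℚ) ≤ ((π.part j \ C).card : ℚ)/n := by positivity
          linarith
        · have hgj : σ.part j = π.part j \ C := by rw [hσpart j, if_neg hjC]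
          obtain ⟨hdec, hdis⟩ := erase_decomp_notmem (π.part j) C hjC
          have hEn : faW n F j (π.part j ∩ C) ≤ 0 := by
            rw [faW_enemies (fun k hk => by
              rw [mem_inter] at hk
              by_cases hji : j = i
              · subst hji
                have hkP : k ∈ P := by rw [hPdef]; exact hk.1
                exact absurd hkP (Finset.disjoint_left.mp hdisjCP hk.2)
              · exact (hisolated k hk.2 j hjC hji).2)]
            have h0 : (0:ℚ) ≤ ((π.part j ∩ C).card : ℚ)/n := div_nonneg (Nat.cast_nonneg _) hn'.le
            linarith
          have hdj : d j = -(faW n F j (π.part j ∩ C)) := by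
            rw [hd]; dsimp only
            rw [hgj, hdec, faW_union hdis]; ring
          rw [hdj]
          linarith
      obtain ⟨j0, hj0⟩ := hCne
      have hstrict : 0 < d j0 := by
        rw [hdC j0 hj0]
        by_cases hsub : C ⊆ π.part j0
        · have hne : π.part j0 ≠ C := fun e => hC (e ▸ π.part_mem.mpr (mem_univ j0))
          have hQC : π.part j0 ∩ C = C := Finset.inter_eq_right.mpr hsub
          have hnem : (π.part j0 \ C).Nonempty := by
            rw [Finset.sdiff_nonempty]
            exact fun h => hne (Finset.Subset.antisymm h hsub)
          have hcardpos : 0 < ((π.part j0 \ C).card : ℚ) := by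
            exact_mod_cast Finset.card_pos.mpr hnem
          rw [hQC]
          have h0 : 0 < ((π.part j0 \ C).card : ℚ)/n := by positivity
          linarith
        · obtain ⟨x, hxC, hxQ⟩ := Finset.not_subset.mp hsub
          have hss : (π.part j0 ∩ C).erase j0 ⊂ C.erase j0 := by
            refine Finset.ssubset_iff_of_subset
              (Finset.erase_subset_erase _ Finset.inter_subset_right) |>.mpr ?_
            refine ⟨x, ?_, ?_⟩
            · rw [mem_erase]
              exact ⟨fun e => hxQ (by rw [e]; exact π.mem_part (mem_univ j0)), hxC⟩
            · rw [mem_erase, mem_inter]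
              tauto
          have hlt : (((π.part j0 ∩ C).erase j0).card : ℚ) + 1 ≤ ((C.erase j0).card : ℚ) := by
            exact_mod_cast Finset.card_lt_card hss
          have h0 : (0:ℚ) ≤ ((π.part j0 \ C).card : ℚ)/n := by positivity
          linarith
      have hpos : 0 < ∑ j : Fin n, d j :=
        Finset.sum_pos' hnonneg ⟨j0, mem_univ j0, hstrict⟩
      linarith
    exact ⟨C, hCparts, Finset.Subset.refl C, fun _ => rfl⟩
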